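/- Define q̃(x) = x − e^{-x²}/(a_0 − ∫_0^x e^{-s²} ds) with a_0 = √π/2. Then for every m ≥ 1 the perturbed vector function Ṽ with components Ṽ₁(x) = V₁(x) and Ṽ₂(x) = V₂(x) + e^{-x²/2}·(∫_0^x e^{-s²/2} V₂(s) ds)/(a_0 − ∫_0^x e^{-s²} ds) satisfies the perturbed Dirac system −Ṽ₁' + q̃ Ṽ₁ = λ Ṽ₂ and Ṽ₂' + q̃ Ṽ₂ = λ Ṽ₁, whenever (V₁, V₂) satisfies the original system −V₁' + x V₁ = λ V₂, V₂' + x V₂ = λ V₁ with λ ≠ 0 and boundary value V₁(0) = 0, assuming a_0 − ∫_0^x e^{-s²} ds > 0 for all x ≥ 0. -/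

import Mathlib

noncomputable def a₀ : ℝ := Real.sqrt Real.pi / 2

noncomputable def qtilde (x : ℝ) : ℝ :=
  x - Real.exp (-x ^ 2) / (a₀ - ∫ s in (0 : ℝ)..x, Real.exp (-s ^ 2))

lemma hasDerivAt_intOf {f : ℝ → ℝ} (hf : Continuous f) (x : ℝ) :
    HasDerivAt (fun u => ∫ s in (0:ℝ)..u, f s) (f x) x :=
  intervalIntegral.integral_hasDerivAt_right (hf.intervalIntegrable _ _)
    (hf.stronglyMeasurableAtFilter _ _) hf.continuousAt

theorem perturbed_dirac_system (l : ℝ) (hl : l ≠ 0) (V₁ V₂ : ℝ → ℝ)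
    (hV₁ : Differentiable ℝ V₁) (hV₂ : Differentiable ℝ V₂)
    (hbc : V₁ 0 = 0)
    (hpos : ∀ x : ℝ, 0 ≤ x → a₀ - (∫ s in (0 : ℝ)..x, Real.exp (-s ^ 2)) > 0)
    (h1 : ∀ x, -deriv V₁ x + x * V₁ x = l * V₂ x)
    (h2 : ∀ x, deriv V₂ x + x * V₂ x = l * V₁ x) :
    let Vt₁ : ℝ → ℝ := V₁
    let Vt₂ : ℝ → ℝ := fun x => V₂ x +
      Real.exp (-x ^ 2 / 2) * (∫ s in (0 : ℝ)..x, Real.exp (-s ^ 2 / 2) * V₂ s) /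
        (a₀ - ∫ s in (0 : ℝ)..x, Real.exp (-s ^ 2))
    ∀ x, -deriv Vt₁ x + qtilde x * Vt₁ x = l * Vt₂ x ∧
         deriv Vt₂ x + qtilde x * Vt₂ x = l * Vt₁ x := by
  intro Vt₁ Vt₂ x
  -- abbreviations
  set g : ℝ → ℝ := fun u => ∫ s in (0:ℝ)..u, Real.exp (-s ^ 2) with hgdef
  set h : ℝ → ℝ := fun u => ∫ s in (0:ℝ)..u, Real.exp (-s ^ 2 / 2) * V₂ s with hhdef
  -- continuity facts
  have cexp2 : Continuous fun s : ℝ => Real.exp (-s ^ 2) := by continuity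
  have cE : Continuous fun s : ℝ => Real.exp (-s ^ 2 / 2) := by continuity
  have cI : Continuous fun s : ℝ => Real.exp (-s ^ 2 / 2) * V₂ s := cE.mul hV₂.continuous
  -- positivity of the denominator everywhere
  have hDpos : ∀ y : ℝ, 0 < a₀ - g y := by
    intro y
    rcases le_or_gt 0 y with hy | hy
    · exact hpos y hy
    · have h0 : g y ≤ 0 := by
        rw [hgdef]
        simp only
        rw [intervalIntegral.integral_symm]
        have : 0 ≤ ∫ s in y..(0:ℝ), Real.exp (-s ^ 2) :=
          intervalIntegral.integral_nonneg hy.le (fun s _ => (Real.exp_pos _).le)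
        linarith
      have ha := hpos 0 le_rfl
      simp only [intervalIntegral.integral_same] at ha
      linarith
  -- derivative facts
  have hE : ∀ y : ℝ, HasDerivAt (fun u : ℝ => Real.exp (-u ^ 2 / 2))
      (Real.exp (-y ^ 2 / 2) * (-y)) y := by
    intro y
    have hin : HasDerivAt (fun u : ℝ => -u ^ 2 / 2) (-y) y := by
      have := (hasDerivAt_pow 2 y).neg.div_const 2
      refine this.congr_deriv ?_
      push_cast
      ring
    exact hin.exp
  have hHy : ∀ y : ℝ, HasDerivAt h (Real.exp (-y ^ 2 / 2) * V₂ y) y :=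
    fun y => hasDerivAt_intOf cI y
  have hGy : ∀ y : ℝ, HasDerivAt g (Real.exp (-y ^ 2)) y :=
    fun y => hasDerivAt_intOf cexp2 y
  have dV1 : ∀ y : ℝ, HasDerivAt V₁ (y * V₁ y - l * V₂ y) y := by
    intro y
    have hd := hV₁.differentiableAt.hasDerivAt (x := y)
    have e := h1 y
    refine hd.congr_deriv ?_
    linarith
  have dV2 : ∀ y : ℝ, HasDerivAt V₂ (l * V₁ y - y * V₂ y) y := by
    intro y
    have hd := hV₂.differentiableAt.hasDerivAt (x := y)
    have e := h2 y
    refine hd.congr_deriv ?_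
    linarith
  -- key identity : l * h = - exp(-x^2/2) * V₁
  have key : ∀ y : ℝ, l * h y = -(Real.exp (-y ^ 2 / 2) * V₁ y) := by
    have hF : ∀ y : ℝ,
        HasDerivAt (fun u => l * h u + Real.exp (-u ^ 2 / 2) * V₁ u) 0 y := by
      intro y
      have d1 := (hHy y).const_mul l
      have d2 := (hE y).mul (dV1 y)
      have := d1.add d2
      refine this.congr_deriv ?_
      ring
    have hconst := is_const_of_deriv_eq_zero
      (f := fun u => l * h u + Real.exp (-u ^ 2 / 2) * V₁ u)
      (fun y => (hF y).differentiableAt) (fun y => (hF y).deriv)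
    intro y
    have h0 : l * h 0 + Real.exp (-(0:ℝ) ^ 2 / 2) * V₁ 0 = 0 := by
      simp [hhdef, hbc]
    have := hconst y 0
    rw [h0] at this
    linarith [this]
  have hDne : a₀ - g x ≠ 0 := ne_of_gt (hDpos x)
  have hexp : Real.exp (-x ^ 2) =
      Real.exp (-x ^ 2 / 2) * Real.exp (-x ^ 2 / 2) := by
    rw [← Real.exp_add]; ring_nf
  constructor
  · -- first equation
    show -deriv V₁ x + qtilde x * V₁ x =
      l * (V₂ x + Real.exp (-x ^ 2 / 2) * h x / (a₀ - g x))
    have e1 := h1 x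
    have K := key x
    unfold qtilde
    rw [show (∫ s in (0:ℝ)..x, Real.exp (-s ^ 2)) = g x from rfl, hexp]
    field_simp
    simp only [← neg_div]
    linear_combination (a₀ - g x) * e1 - Real.exp (-x ^ 2 / 2) * K
  · -- second equation
    have dnum : HasDerivAt (fun u => Real.exp (-u ^ 2 / 2) * h u)
        (Real.exp (-x ^ 2 / 2) * (-x) * h x +
          Real.exp (-x ^ 2 / 2) * (Real.exp (-x ^ 2 / 2) * V₂ x)) x :=
      (hE x).mul (hHy x)
    have dD : HasDerivAt (fun u => a₀ - g u) (-(Real.exp (-x ^ 2))) x :=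
      (hGy x).const_sub a₀
    have dfrac := dnum.div dD hDne
    have dVt2 : HasDerivAt Vt₂
        (((Real.exp (-x ^ 2 / 2) * (-x) * h x +
            Real.exp (-x ^ 2 / 2) * (Real.exp (-x ^ 2 / 2) * V₂ x)) * (a₀ - g x) -
          Real.exp (-x ^ 2 / 2) * h x * -(Real.exp (-x ^ 2))) / (a₀ - g x) ^ 2
          + (l * V₁ x - x * V₂ x)) x := by
      have := dfrac.add (dV2 x)
      have hfun : Vt₂ = ((fun u => Real.exp (-u ^ 2 / 2) * h u) / fun u => a₀ - g u) + V₂ := by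
        ext u
        show V₂ u + Real.exp (-u ^ 2 / 2) * h u / (a₀ - g u) =
          Real.exp (-u ^ 2 / 2) * h u / (a₀ - g u) + V₂ u
        ring
      rw [hfun]; exact this
    rw [dVt2.deriv]
    show _ + qtilde x * (V₂ x + Real.exp (-x ^ 2 / 2) * h x / (a₀ - g x)) = l * V₁ x
    unfold qtilde
    rw [show (∫ s in (0:ℝ)..x, Real.exp (-s ^ 2)) = g x from rfl, hexp]
    field_simp
    ring
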